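/- Let m > 0 and p, q ∈ ℝ³. Then | m/λ(q) − m/λ(p − q) | ≤ |p| / ( √(λ(q) + m) · √(λ(p − q) + m) ). -/

import Mathlib

/-- `lam m p = √(|p|² + m²)`. -/
noncomputable def lam (m : ℝ) (p : EuclideanSpace ℝ (Fin 3)) : ℝ :=
  Real.sqrt (‖p‖ ^ 2 + m ^ 2)

/-- Core inequality in "hyperbolic" variables. -/
lemma lam_core (S C D : ℝ) (hS : 0 ≤ S) (hC : C^2 = S^2 + 1) (hD : 1 ≤ D) (hDC : D ≤ C) :
    S * (C + D) ≤ C * (S^2 + D^2) := by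
  nlinarith [sq_nonneg (S-1), sq_nonneg (C-S), sq_nonneg (D-1),
    mul_nonneg (sub_nonneg.2 hDC) hS, sq_nonneg (C-D),
    mul_nonneg (sub_nonneg.2 hD) (sub_nonneg.2 hDC)]

lemma lam_core' (μ s c d : ℝ) (hμ : 0 < μ) (hs : 0 ≤ s) (hc : c^2 = s^2 + 4*μ^2)
    (hd : 2*μ ≤ d) (hdc : d ≤ c) :
    2*μ * s * (c + d) ≤ c * (s^2 + d^2) := by
  have h := lam_core (s/(2*μ)) (c/(2*μ)) (d/(2*μ)) (by positivity)
    (by field_simp; linarith) (by rw [le_div_iff₀ (by linarith)]; linarith)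
    (by apply div_le_div_of_nonneg_right hdc; linarith)
  have h4 : (0:ℝ) < (2*μ)^3 := by positivity
  calc 2*μ*s*(c+d) = ((s/(2*μ)) * (c/(2*μ) + d/(2*μ))) * (2*μ)^3 := by field_simp
    _ ≤ ((c/(2*μ)) * ((s/(2*μ))^2 + (d/(2*μ))^2)) * (2*μ)^3 := by
        exact mul_le_mul_of_nonneg_right h (le_of_lt h4)
    _ = c * (s^2 + d^2) := by field_simp

lemma lam_star (m sa ca sb cb : ℝ) (hm : 0 < m) (hsa : 0 ≤ sa) (hsb : 0 ≤ sb)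
    (hca0 : 0 ≤ ca) (hcb0 : 0 ≤ cb)
    (hca : ca^2 = sa^2 + 2*m) (hcb : cb^2 = sb^2 + 2*m) :
    m * (sb*cb + sa*ca) * (ca*cb) ≤
      (m+sa^2) * (m+sb^2) * ((m+sa^2) + (m+sb^2)) := by
  set s := sa*cb + ca*sb with hsdef
  set c := ca*cb + sa*sb with hcdef
  set d := ca*cb - sa*sb with hddef
  have hs : 0 ≤ s := by positivity
  have hc : c^2 = s^2 + 4*m^2 := by
    linear_combination (ca^2 - sa^2) * hcb + 2*m*hca
  have hd : 2*m ≤ d := by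
    have h1 : (sa*sb + 2*m)^2 ≤ (ca*cb)^2 := by nlinarith [sq_nonneg (sa - sb)]
    have h2 : sa*sb + 2*m ≤ ca*cb :=
      le_of_pow_le_pow_left₀ two_ne_zero (mul_nonneg hca0 hcb0) h1
    rw [hddef]; linarith
  have hdc : d ≤ c := by
    have := mul_nonneg hsa hsb
    rw [hddef, hcdef]; linarith
  have h := lam_core' m s c d hm hs hc hd hdc
  have h2 := mul_le_mul_of_nonneg_right h (by linarith : (0:ℝ) ≤ d)
  have hsd : s * d = 2*m*(sb*cb + sa*ca) := by
    rw [hsdef, hddef]; linear_combination (sa*ca)*hcb + (sb*cb)*hca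
  have hcd : c * d = 2*m*((m+sa^2) + (m+sb^2)) := by
    rw [hcdef, hddef]; linear_combination cb^2*hca + (sa^2+2*m)*hcb
  have hs2d2 : s^2 + d^2 = 4*((m+sa^2)*(m+sb^2)) := by
    rw [hsdef, hddef]; linear_combination (sb^2+cb^2)*hca + (2*sa^2+2*m)*hcb
  have e1 : 2*m*s*(c+d)*d = 8*m*(m * (sb*cb + sa*ca) * (ca*cb)) := by
    have hcpd : c + d = 2*(ca*cb) := by rw [hcdef, hddef]; ring
    calc 2*m*s*(c+d)*d = 2*m*(s*d)*(c+d) := by ring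
      _ = 2*m*(2*m*(sb*cb + sa*ca))*(2*(ca*cb)) := by rw [hsd, hcpd]
      _ = 8*m*(m * (sb*cb + sa*ca) * (ca*cb)) := by ring
  have e2 : c*(s^2+d^2)*d = 8*m*((m+sa^2) * (m+sb^2) * ((m+sa^2) + (m+sb^2))) := by
    calc c*(s^2+d^2)*d = (c*d)*(s^2+d^2) := by ring
      _ = (2*m*((m+sa^2) + (m+sb^2)))*(4*((m+sa^2)*(m+sb^2))) := by rw [hcd, hs2d2]
      _ = 8*m*((m+sa^2) * (m+sb^2) * ((m+sa^2) + (m+sb^2))) := by ring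
  rw [e1, e2] at h2
  have h8 : (0:ℝ) < 8*m := by linarith
  exact le_of_mul_le_mul_left (by linarith [h2]) h8

/-- For `m > 0` and `p, q ∈ ℝ³`:
`| m/λ(q) − m/λ(p − q) | ≤ |p| / ( √(λ(q) + m) · √(λ(p − q) + m) )`. -/
theorem lam_inverse_difference_bound (m : ℝ) (hm : 0 < m)
    (p q : EuclideanSpace ℝ (Fin 3)) :
    |m / lam m q - m / lam m (p - q)| ≤
      ‖p‖ / (Real.sqrt (lam m q + m) * Real.sqrt (lam m (p - q) + m)) := by
  set a := lam m q with hadef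
  set b := lam m (p - q) with hbdef
  set N := ‖q‖ with hNdef
  set M := ‖p - q‖ with hMdef
  set P := ‖p‖ with hPdef
  have hN0 : 0 ≤ N := norm_nonneg q
  have hM0 : 0 ≤ M := norm_nonneg _
  have hP0 : 0 ≤ P := norm_nonneg p
  have ha2 : a^2 = N^2 + m^2 := Real.sq_sqrt (by positivity)
  have hb2 : b^2 = M^2 + m^2 := Real.sq_sqrt (by positivity)
  have ha0 : 0 ≤ a := Real.sqrt_nonneg _
  have hb0 : 0 ≤ b := Real.sqrt_nonneg _
  have ham : m ≤ a := by nlinarith [sq_nonneg N]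
  have hbm : m ≤ b := by nlinarith [sq_nonneg M]
  set sa := Real.sqrt (a - m) with hsadef
  set ca := Real.sqrt (a + m) with hcadef
  set sb := Real.sqrt (b - m) with hsbdef
  set cb := Real.sqrt (b + m) with hcbdef
  have hsa0 : 0 ≤ sa := Real.sqrt_nonneg _
  have hca0 : 0 ≤ ca := Real.sqrt_nonneg _
  have hsb0 : 0 ≤ sb := Real.sqrt_nonneg _
  have hcb0 : 0 ≤ cb := Real.sqrt_nonneg _
  have hsa2 : sa^2 = a - m := Real.sq_sqrt (by linarith)
  have hca2 : ca^2 = a + m := Real.sq_sqrt (by linarith)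
  have hsb2 : sb^2 = b - m := Real.sq_sqrt (by linarith)
  have hcb2 : cb^2 = b + m := Real.sq_sqrt (by linarith)
  have hcapos : 0 < ca := Real.sqrt_pos.2 (by linarith)
  have hcbpos : 0 < cb := Real.sqrt_pos.2 (by linarith)
  have hapos : 0 < a := lt_of_lt_of_le hm ham
  have hbpos : 0 < b := lt_of_lt_of_le hm hbm
  have hNsaca : N = sa * ca := by
    rw [hsadef, hcadef, ← Real.sqrt_mul (by linarith)]
    rw [show (a - m) * (a + m) = N^2 by linear_combination ha2]
    exact (Real.sqrt_sq hN0).symm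
  have hMsbcb : M = sb * cb := by
    rw [hsbdef, hcbdef, ← Real.sqrt_mul (by linarith)]
    rw [show (b - m) * (b + m) = M^2 by linear_combination hb2]
    exact (Real.sqrt_sq hM0).symm
  -- the star inequality
  have hstar : m * (M + N) * (ca*cb) ≤ a * b * (a + b) := by
    have := lam_star m sa ca sb cb hm hsa0 hsb0 hca0 hcb0
      (by rw [hca2, hsa2]; ring) (by rw [hcb2, hsb2]; ring)
    rw [hMsbcb, hNsaca]
    calc m * (sb*cb + sa*ca) * (ca*cb)
        ≤ (m+sa^2) * (m+sb^2) * ((m+sa^2) + (m+sb^2)) := this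
      _ = a * b * (a + b) := by rw [hsa2, hsb2]; ring
  -- Lipschitz-type bound
  have hMN : |M - N| ≤ P := by
    have h := abs_norm_sub_norm_le (p - q) (-q)
    rw [norm_neg, sub_neg_eq_add, sub_add_cancel] at h
    exact h
  -- main computation
  have hdiff : m / a - m / b = m * (b - a) / (a * b) := by
    field_simp
  rw [hdiff, abs_div, abs_of_pos (by positivity : (0:ℝ) < a * b),
    div_le_div_iff₀ (by positivity) (by positivity)]
  have habs : |m * (b - a)| = m * |b - a| := by
    rw [abs_mul, abs_of_pos hm]
  rw [habs]
  have hab : 0 < a + b := by linarith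
  apply le_of_mul_le_mul_right _ hab
  have key : m * |b - a| * (a + b) ≤ m * P * (M + N) := by
    have h1 : |b - a| * (a + b) = |b^2 - a^2| := by
      rw [show b^2 - a^2 = (b - a) * (a + b) by ring, abs_mul,
        abs_of_pos hab]
    have h2 : |b^2 - a^2| = |M - N| * (M + N) := by
      rw [show b^2 - a^2 = (M - N) * (M + N) by linear_combination hb2 - ha2,
        abs_mul, abs_of_nonneg (by linarith : (0:ℝ) ≤ M + N)]
    have h3 : |M - N| * (M + N) ≤ P * (M + N) :=
      mul_le_mul_of_nonneg_right hMN (by linarith)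
    calc m * |b - a| * (a + b) = m * (|b - a| * (a + b)) := by ring
      _ = m * (|M - N| * (M + N)) := by rw [h1, h2]
      _ ≤ m * (P * (M + N)) := by
          exact mul_le_mul_of_nonneg_left h3 hm.le
      _ = m * P * (M + N) := by ring
  calc m * |b - a| * (ca * cb) * (a + b)
      = (m * |b - a| * (a + b)) * (ca * cb) := by ring
    _ ≤ (m * P * (M + N)) * (ca * cb) := by
        exact mul_le_mul_of_nonneg_right key (by positivity)
    _ = P * (m * (M + N) * (ca * cb)) := by ring
    _ ≤ P * (a * b * (a + b)) := mul_le_mul_of_nonneg_left hstar hP0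
    _ = P * (a * b) * (a + b) := by ring
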